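/- Smoothness and uniform bounds for the stable-leaf functions ζ (Proposition 4.13): Let τ ∈ C^∞(φ(I); ℝ). For each admissible right-infinite word w_+ = (w_0,w_1,…) ∈ W_+ and each x ∈ I_{w_0}, the series ζ_{w_+}(x) := −∑_{k≥1} (φ_{w_{0,k}})'(x) · τ'(φ_{w_{0,k}}(x)) converges, together with all x-derivatives, uniformly on I_{w_0}; it defines a C^∞ function ζ_{w_+} on I_{w_0}, and for every α ∈ ℕ there exists C_α > 0, independent of w_+ ∈ W_+, such that |∂_x^α ζ_{w_+}(x)| ≤ C_α for all x ∈ I_{w_0}. -/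

import Mathlib

open Set Filter

section ZetaAux

open Metric Real

private lemma hleTop' (n : ℕ) : ((n : ℕ) : WithTop ℕ∞) ≤ ((⊤ : ℕ∞) : WithTop ℕ∞) := by
  exact_mod_cast le_top

private lemma oneLeTop' : (1 : WithTop ℕ∞) ≤ ((⊤ : ℕ∞) : WithTop ℕ∞) := by exact_mod_cast le_top

end ZetaAux

/-- Forward composition `φ_{w_{0,k}} = φ_{w_{k−1},w_k} ∘ ⋯ ∘ φ_{w_0,w_1}` along a
right-infinite word. -/
def compFwd {N : ℕ} (φm : Fin N → Fin N → ℝ → ℝ) (w : ℕ → Fin N) : ℕ → ℝ → ℝ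
  | 0 => id
  | k + 1 => φm (w k) (w (k + 1)) ∘ compFwd φm w k

section ZetaAux2

open Metric Real

private lemma compFwd_succ' {N : ℕ} (φm : Fin N → Fin N → ℝ → ℝ) (w : ℕ → Fin N) (k : ℕ) :
    compFwd φm w (k + 1) = φm (w k) (w (k + 1)) ∘ compFwd φm w k := rfl

private lemma compFwd_smooth {N : ℕ} {φm : Fin N → Fin N → ℝ → ℝ} {adj : Fin N → Fin N → Prop}
    (hsmooth : ∀ i j, adj i j → ContDiff ℝ (⊤ : ℕ∞) (φm i j))
    {w : ℕ → Fin N} (hw : ∀ n, adj (w n) (w (n + 1))) (k : ℕ) :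
    ContDiff ℝ (⊤ : ℕ∞) (compFwd φm w k) := by
  induction k with
  | zero => exact contDiff_id
  | succ k ih => exact (hsmooth _ _ (hw k)).comp ih

private lemma compFwd_mem {N : ℕ} {φm : Fin N → Fin N → ℝ → ℝ} {adj : Fin N → Fin N → Prop}
    {V : Fin N → Set ℝ} (hmap : ∀ i j, adj i j → ∀ x ∈ V i, φm i j x ∈ V j)
    {w : ℕ → Fin N} (hw : ∀ n, adj (w n) (w (n + 1))) {x : ℝ} (hx : x ∈ V (w 0)) (k : ℕ) :
    compFwd φm w k x ∈ V (w k) := by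
  induction k with
  | zero => exact hx
  | succ k ih => exact hmap _ _ (hw k) _ ih

private lemma deriv_compFwd_succ {N : ℕ} {φm : Fin N → Fin N → ℝ → ℝ}
    {adj : Fin N → Fin N → Prop}
    (hsmooth : ∀ i j, adj i j → ContDiff ℝ (⊤ : ℕ∞) (φm i j))
    {w : ℕ → Fin N} (hw : ∀ n, adj (w n) (w (n + 1))) (k : ℕ) :
    deriv (compFwd φm w (k + 1)) =
      fun x => deriv (φm (w k) (w (k + 1))) (compFwd φm w k x) * deriv (compFwd φm w k) x := by
  funext x
  rw [compFwd_succ']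
  exact deriv_comp x (((hsmooth _ _ (hw k)).differentiable (lt_of_lt_of_le zero_lt_one oneLeTop').ne').differentiableAt)
    (((compFwd_smooth hsmooth hw k).differentiable (lt_of_lt_of_le zero_lt_one oneLeTop').ne').differentiableAt)

private lemma deriv_compFwd_bound {N : ℕ} {φm : Fin N → Fin N → ℝ → ℝ}
    {adj : Fin N → Fin N → Prop} {V : Fin N → Set ℝ} {θ₁ : ℝ}
    (hsmooth : ∀ i j, adj i j → ContDiff ℝ (⊤ : ℕ∞) (φm i j))
    (hmap : ∀ i j, adj i j → ∀ x ∈ V i, φm i j x ∈ V j)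
    (hd : ∀ i j, adj i j → ∀ x ∈ V i, |deriv (φm i j) x| ≤ θ₁) (hθ₁ : 0 ≤ θ₁)
    {w : ℕ → Fin N} (hw : ∀ n, adj (w n) (w (n + 1))) {x : ℝ} (hx : x ∈ V (w 0)) (k : ℕ) :
    |deriv (compFwd φm w k) x| ≤ θ₁ ^ k := by
  induction k with
  | zero => simp [compFwd]
  | succ k ih =>
    rw [deriv_compFwd_succ hsmooth hw k]
    have h1 := hd _ _ (hw k) _ (compFwd_mem hmap hw hx k)
    calc |deriv (φm (w k) (w (k + 1))) (compFwd φm w k x) * deriv (compFwd φm w k) x|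
        = |deriv (φm (w k) (w (k + 1))) (compFwd φm w k x)| * |deriv (compFwd φm w k) x| :=
          abs_mul _ _
      _ ≤ θ₁ * θ₁ ^ k := mul_le_mul h1 ih (abs_nonneg _) hθ₁
      _ = θ₁ ^ (k + 1) := by ring

private lemma iteratedDerivWithin_eq_iteratedDeriv' {f : ℝ → ℝ} (hf : ContDiff ℝ (⊤ : ℕ∞) f)
    {s : Set ℝ} (hs : UniqueDiffOn ℝ s) {x : ℝ} (hx : x ∈ s) (n : ℕ) :
    iteratedDerivWithin n f s x = iteratedDeriv n f x := by
  have h1 : HasFTaylorSeriesUpTo ((⊤ : ℕ∞) : WithTop ℕ∞) f (ftaylorSeries ℝ f) := by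
    rw [← hasFTaylorSeriesUpToOn_univ_iff, ← ftaylorSeriesWithin_univ]
    exact hf.contDiffOn.ftaylorSeriesWithin uniqueDiffOn_univ
  have h2 := (h1.hasFTaylorSeriesUpToOn s).eq_iteratedFDerivWithin_of_uniqueDiffOn
      (hleTop' n) hs hx
  have h3 : iteratedFDerivWithin ℝ n f s x = iteratedFDeriv ℝ n f x := by
    rw [← h2]; rfl
  rw [iteratedDerivWithin_eq_iteratedFDerivWithin, iteratedDeriv_eq_iteratedFDeriv, h3]

private lemma iteratedFDeriv_congr_nhds' {f g : ℝ → ℝ} {x : ℝ} (h : f =ᶠ[nhds x] g) (n : ℕ) :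
    iteratedFDeriv ℝ n f x = iteratedFDeriv ℝ n g x := by
  have h' : f =ᶠ[nhdsWithin x univ] g := by rwa [nhdsWithin_univ]
  have := Filter.EventuallyEq.iteratedFDerivWithin_eq (𝕜 := ℝ) h' (h.eq_of_nhds) n
  rwa [iteratedFDerivWithin_univ, iteratedFDerivWithin_univ] at this

private lemma iteratedDeriv_congr_nhds' {f g : ℝ → ℝ} {x : ℝ} (h : f =ᶠ[nhds x] g) (n : ℕ) :
    iteratedDeriv n f x = iteratedDeriv n g x := by
  rw [iteratedDeriv_eq_iteratedFDeriv, iteratedDeriv_eq_iteratedFDeriv,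
    iteratedFDeriv_congr_nhds' h n]

private lemma iteratedDeriv_sum' {ι : Type*} {u : Finset ι} {f : ι → ℝ → ℝ}
    (h : ∀ j ∈ u, ContDiff ℝ (⊤ : ℕ∞) (f j)) (α : ℕ) (x : ℝ) :
    iteratedDeriv α (fun y => ∑ j ∈ u, f j y) x = ∑ j ∈ u, iteratedDeriv α (f j) x := by
  simp only [iteratedDeriv_eq_iteratedFDeriv]
  rw [show (fun y => ∑ j ∈ u, f j y) = (∑ j ∈ u, f j ·) from rfl,
    iteratedFDeriv_sum (fun j hj => (h j hj).of_le (hleTop' α))]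
  simp [ContinuousMultilinearMap.sum_apply]

private lemma main_est {N : ℕ} {φm : Fin N → Fin N → ℝ → ℝ} {adj : Fin N → Fin N → Prop}
    {V : Fin N → Set ℝ} {Kc : Set ℝ}
    (hsmooth : ∀ i j, adj i j → ContDiff ℝ (⊤ : ℕ∞) (φm i j))
    (hmap : ∀ i j, adj i j → ∀ x ∈ V i, φm i j x ∈ V j)
    (hVK : ∀ i, V i ⊆ Kc)
    {θ₁ θ₂ : ℝ} (hθ₁0 : 0 ≤ θ₁) (h12 : θ₁ < θ₂) (hθ₂1 : θ₂ ≤ 1)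
    (hd : ∀ i j, adj i j → ∀ x ∈ V i, |deriv (φm i j) x| ≤ θ₁)
    (hB : ∀ m : ℕ, ∃ B : ℝ, 0 ≤ B ∧ ∀ i j, adj i j → ∀ x ∈ Kc,
      ‖iteratedFDeriv ℝ m (deriv (φm i j)) x‖ ≤ B)
    (α : ℕ) :
    ∃ C : ℝ, 0 < C ∧ ∀ (w : ℕ → Fin N), (∀ n, adj (w n) (w (n + 1))) → ∀ k : ℕ,
      ∀ x ∈ V (w 0), ‖iteratedFDeriv ℝ α (deriv (compFwd φm w k)) x‖ ≤ C * θ₂ ^ k := by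
  have hθ₂0 : 0 ≤ θ₂ := hθ₁0.trans h12.le
  induction α using Nat.strong_induction_on with
  | _ α IH =>
  rcases Nat.eq_zero_or_pos α with hα | hα
  · subst hα
    refine ⟨1, one_pos, fun w hw k x hx => ?_⟩
    rw [norm_iteratedFDeriv_zero, one_mul, Real.norm_eq_abs]
    exact (deriv_compFwd_bound hsmooth hmap hd hθ₁0 hw hx k).trans
      (pow_le_pow_left₀ hθ₁0 h12.le k)
  have IH' : ∀ i : ℕ, ∃ C : ℝ, 0 < C ∧ (i < α → ∀ (w : ℕ → Fin N),
      (∀ n, adj (w n) (w (n + 1))) → ∀ k : ℕ, ∀ x ∈ V (w 0),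
      ‖iteratedFDeriv ℝ i (deriv (compFwd φm w k)) x‖ ≤ C * θ₂ ^ k) := by
    intro i
    by_cases h : i < α
    · obtain ⟨C, hC0, hC⟩ := IH i h
      exact ⟨C, hC0, fun _ => hC⟩
    · exact ⟨1, one_pos, fun h' => absurd h' h⟩
  choose Cf hCf0 hCf using IH'
  set Q := ∑ i ∈ Finset.range α, Cf i with hQ
  have hQ0 : 0 ≤ Q := Finset.sum_nonneg fun i _ => (hCf0 i).le
  have hCfle : ∀ i, i < α → Cf i ≤ Q := fun i hi =>
    Finset.single_le_sum (fun j _ => (hCf0 j).le) (Finset.mem_range.2 hi)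
  set D := max 1 Q with hD
  have hD1 : (1:ℝ) ≤ D := le_max_left _ _
  have hgD : ∀ (w : ℕ → Fin N), (∀ n, adj (w n) (w (n + 1))) → ∀ k : ℕ, ∀ x, x ∈ V (w 0) →
      ∀ m : ℕ, 1 ≤ m → m ≤ α → ‖iteratedFDeriv ℝ m (compFwd φm w k) x‖ ≤ D ^ m := by
    intro w hw k x hx m hm1 hmα
    obtain ⟨m', rfl⟩ : ∃ m', m = m' + 1 := ⟨m - 1, by omega⟩
    have hmlt : m' < α := by omega
    have heq : ‖iteratedFDeriv ℝ (m' + 1) (compFwd φm w k) x‖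
        = ‖iteratedFDeriv ℝ m' (deriv (compFwd φm w k)) x‖ := by
      rw [norm_iteratedFDeriv_eq_norm_iteratedDeriv, norm_iteratedFDeriv_eq_norm_iteratedDeriv,
        iteratedDeriv_succ']
    rw [heq]
    calc ‖iteratedFDeriv ℝ m' (deriv (compFwd φm w k)) x‖ ≤ Cf m' * θ₂ ^ k :=
          hCf m' hmlt w hw k x hx
      _ ≤ Cf m' := mul_le_of_le_one_right (hCf0 m').le (pow_le_one₀ hθ₂0 hθ₂1)
      _ ≤ D := (hCfle m' hmlt).trans (le_max_right _ _)
      _ ≤ D ^ (m' + 1) := le_self_pow₀ hD1 (by omega)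
  choose Bf hBf0 hBf using hB
  set Bs := ∑ m ∈ Finset.range (α+1), Bf m with hBs
  have hBs0 : 0 ≤ Bs := Finset.sum_nonneg fun m _ => hBf0 m
  have hBfle : ∀ m, m ≤ α → Bf m ≤ Bs := fun m hm =>
    Finset.single_le_sum (fun j _ => hBf0 j) (Finset.mem_range.2 (by omega))
  set A := (α.factorial : ℝ) * Bs * D ^ α + 1 with hA
  have hD0 : (0:ℝ) < D := lt_of_lt_of_le one_pos hD1
  have hA0 : 0 < A := by positivity
  have hcomp : ∀ (w : ℕ → Fin N), (∀ n, adj (w n) (w (n + 1))) → ∀ k : ℕ, ∀ x, x ∈ V (w 0) →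
      ∀ i : ℕ, i ≤ α →
      ‖iteratedFDeriv ℝ i (deriv (φm (w k) (w (k+1))) ∘ compFwd φm w k) x‖ ≤ A := by
    intro w hw k x hx i hiα
    have h1 : ∀ m, m ≤ i →
        ‖iteratedFDeriv ℝ m (deriv (φm (w k) (w (k+1)))) (compFwd φm w k x)‖ ≤ Bs :=
      fun m hm => (hBf m _ _ (hw k) _ (hVK _ (compFwd_mem hmap hw hx k))).trans
        (hBfle m (by omega))
    have h2 : ∀ m, 1 ≤ m → m ≤ i → ‖iteratedFDeriv ℝ m (compFwd φm w k) x‖ ≤ D ^ m :=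
      fun m h1m h2m => hgD w hw k x hx m h1m (by omega)
    have hle := norm_iteratedFDeriv_comp_le (𝕜 := ℝ) (N := ((⊤:ℕ∞):WithTop ℕ∞))
      ((contDiff_infty_iff_deriv.mp (hsmooth _ _ (hw k))).2) (compFwd_smooth hsmooth hw k)
      (hleTop' i) x h1 h2
    refine hle.trans ?_
    have hf1 : (i.factorial : ℝ) ≤ (α.factorial : ℝ) := by
      exact_mod_cast Nat.factorial_le hiα
    have hf2 : D ^ i ≤ D ^ α := pow_le_pow_right₀ hD1 hiα
    have : (i.factorial : ℝ) * Bs * D ^ i ≤ (α.factorial : ℝ) * Bs * D ^ α := by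
      apply mul_le_mul (mul_le_mul hf1 le_rfl hBs0 (by positivity)) hf2 (by positivity)
        (by positivity)
    linarith
  set E := ∑ i ∈ Finset.range α, (α.choose (i+1) : ℝ) * A * Cf (α - (i+1)) with hE
  have hE0 : 0 ≤ E := Finset.sum_nonneg fun i _ =>
    mul_nonneg (mul_nonneg (Nat.cast_nonneg _) hA0.le) (hCf0 _).le
  set C := max 1 (E / (θ₂ - θ₁)) with hC
  have hC0 : 0 < C := lt_of_lt_of_le one_pos (le_max_left _ _)
  have hsub : 0 < θ₂ - θ₁ := sub_pos.2 h12
  have hCE : E ≤ C * (θ₂ - θ₁) := by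
    calc E = E / (θ₂ - θ₁) * (θ₂ - θ₁) := (div_mul_cancel₀ _ hsub.ne').symm
      _ ≤ C * (θ₂ - θ₁) :=
        mul_le_mul_of_nonneg_right (le_max_right _ _) hsub.le
  refine ⟨C, hC0, fun w hw => ?_⟩
  intro k
  induction k with
  | zero =>
    intro x hx
    have h0 : deriv (compFwd φm w 0) = fun _ => (1:ℝ) := by
      funext y; simp [compFwd]
    rw [h0, iteratedFDeriv_const_of_ne (by omega : α ≠ 0)]
    simpa using hC0.le
  | succ k ihk =>
    intro x hx
    rw [deriv_compFwd_succ hsmooth hw k]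
    have hfun : (fun x => deriv (φm (w k) (w (k + 1))) (compFwd φm w k x)
          * deriv (compFwd φm w k) x)
        = fun x => (deriv (φm (w k) (w (k + 1))) ∘ compFwd φm w k) x
          * deriv (compFwd φm w k) x := rfl
    rw [hfun]
    have hcd1 : ContDiff ℝ ((⊤:ℕ∞):WithTop ℕ∞) (deriv (φm (w k) (w (k + 1))) ∘ compFwd φm w k) :=
      ((contDiff_infty_iff_deriv.mp (hsmooth _ _ (hw k))).2).comp (compFwd_smooth hsmooth hw k)
    have hcd2 : ContDiff ℝ ((⊤:ℕ∞):WithTop ℕ∞) (deriv (compFwd φm w k)) :=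
      (contDiff_infty_iff_deriv.mp (compFwd_smooth hsmooth hw k)).2
    refine (norm_iteratedFDeriv_mul_le hcd1 hcd2 x (hleTop' α)).trans ?_
    rw [Finset.sum_range_succ']
    have hterm0 : (α.choose 0 : ℝ)
          * ‖iteratedFDeriv ℝ 0 (deriv (φm (w k) (w (k + 1))) ∘ compFwd φm w k) x‖
          * ‖iteratedFDeriv ℝ (α - 0) (deriv (compFwd φm w k)) x‖
        ≤ θ₁ * (C * θ₂ ^ k) := by
      rw [Nat.choose_zero_right, Nat.cast_one, one_mul, norm_iteratedFDeriv_zero, Nat.sub_zero]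
      have h1 : ‖(deriv (φm (w k) (w (k + 1))) ∘ compFwd φm w k) x‖ ≤ θ₁ := by
        rw [Real.norm_eq_abs]
        exact hd _ _ (hw k) _ (compFwd_mem hmap hw hx k)
      exact mul_le_mul h1 (ihk x hx) (norm_nonneg _) hθ₁0
    have hterms : ∀ i ∈ Finset.range α,
        (α.choose (i+1) : ℝ)
          * ‖iteratedFDeriv ℝ (i+1) (deriv (φm (w k) (w (k + 1))) ∘ compFwd φm w k) x‖
          * ‖iteratedFDeriv ℝ (α - (i+1)) (deriv (compFwd φm w k)) x‖
        ≤ ((α.choose (i+1) : ℝ) * A * Cf (α - (i+1))) * θ₂ ^ k := by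
      intro i hi
      have hi' := Finset.mem_range.1 hi
      have h1 : ‖iteratedFDeriv ℝ (i+1) (deriv (φm (w k) (w (k + 1))) ∘ compFwd φm w k) x‖ ≤ A :=
        hcomp w hw k x hx (i+1) (by omega)
      have h2 : ‖iteratedFDeriv ℝ (α - (i+1)) (deriv (compFwd φm w k)) x‖
          ≤ Cf (α - (i+1)) * θ₂ ^ k := hCf (α - (i+1)) (by omega) w hw k x hx
      calc (α.choose (i+1) : ℝ)
            * ‖iteratedFDeriv ℝ (i+1) (deriv (φm (w k) (w (k + 1))) ∘ compFwd φm w k) x‖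
            * ‖iteratedFDeriv ℝ (α - (i+1)) (deriv (compFwd φm w k)) x‖
          ≤ (α.choose (i+1) : ℝ) * A * (Cf (α - (i+1)) * θ₂ ^ k) :=
            mul_le_mul (mul_le_mul_of_nonneg_left h1 (by positivity)) h2 (norm_nonneg _)
              (by positivity)
        _ = ((α.choose (i+1) : ℝ) * A * Cf (α - (i+1))) * θ₂ ^ k := by ring
    calc (∑ i ∈ Finset.range α, (α.choose (i+1) : ℝ)
            * ‖iteratedFDeriv ℝ (i+1) (deriv (φm (w k) (w (k + 1))) ∘ compFwd φm w k) x‖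
            * ‖iteratedFDeriv ℝ (α - (i+1)) (deriv (compFwd φm w k)) x‖)
          + (α.choose 0 : ℝ)
            * ‖iteratedFDeriv ℝ 0 (deriv (φm (w k) (w (k + 1))) ∘ compFwd φm w k) x‖
            * ‖iteratedFDeriv ℝ (α - 0) (deriv (compFwd φm w k)) x‖
        ≤ (∑ i ∈ Finset.range α, ((α.choose (i+1) : ℝ) * A * Cf (α - (i+1))) * θ₂ ^ k)
          + θ₁ * (C * θ₂ ^ k) := add_le_add (Finset.sum_le_sum hterms) hterm0
      _ = E * θ₂ ^ k + θ₁ * C * θ₂ ^ k := by rw [← Finset.sum_mul]; ring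
      _ ≤ C * θ₂ ^ (k+1) := by
        have hp : θ₂ ^ (k+1) = θ₂ ^ k * θ₂ := pow_succ _ _
        have hm := mul_le_mul_of_nonneg_right hCE (pow_nonneg hθ₂0 k)
        nlinarith [pow_nonneg hθ₂0 k, hC0.le]

private lemma term_est {N : ℕ} {φm : Fin N → Fin N → ℝ → ℝ} {adj : Fin N → Fin N → Prop}
    {V : Fin N → Set ℝ} {Kc : Set ℝ} {τ : ℝ → ℝ}
    (hsmooth : ∀ i j, adj i j → ContDiff ℝ (⊤ : ℕ∞) (φm i j))
    (hmap : ∀ i j, adj i j → ∀ x ∈ V i, φm i j x ∈ V j)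
    (hVK : ∀ i, V i ⊆ Kc)
    {θ₂ : ℝ} (hθ₂0 : 0 ≤ θ₂) (hθ₂1 : θ₂ ≤ 1)
    (hτ : ContDiff ℝ (⊤ : ℕ∞) τ)
    (hτB : ∀ m : ℕ, ∃ B : ℝ, 0 ≤ B ∧ ∀ x ∈ Kc, ‖iteratedFDeriv ℝ m (deriv τ) x‖ ≤ B)
    (hmain : ∀ α : ℕ, ∃ C : ℝ, 0 < C ∧ ∀ (w : ℕ → Fin N), (∀ n, adj (w n) (w (n + 1))) →
      ∀ k : ℕ, ∀ x ∈ V (w 0), ‖iteratedFDeriv ℝ α (deriv (compFwd φm w k)) x‖ ≤ C * θ₂ ^ k)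
    (α : ℕ) :
    ∃ C : ℝ, 0 < C ∧ ∀ (w : ℕ → Fin N), (∀ n, adj (w n) (w (n + 1))) → ∀ k : ℕ,
      ∀ x ∈ V (w 0),
      ‖iteratedFDeriv ℝ α
        (fun y => deriv (compFwd φm w (k+1)) y * deriv τ (compFwd φm w (k+1) y)) x‖
      ≤ C * θ₂ ^ k := by
  choose Cf hCf0 hCf using hmain
  set Q := ∑ i ∈ Finset.range (α+1), Cf i with hQ
  have hCfle : ∀ i, i ≤ α → Cf i ≤ Q := fun i hi =>
    Finset.single_le_sum (fun j _ => (hCf0 j).le) (Finset.mem_range.2 (by omega))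
  set D := max 1 Q with hD
  have hD1 : (1:ℝ) ≤ D := le_max_left _ _
  have hD0 : (0:ℝ) < D := lt_of_lt_of_le one_pos hD1
  have hgD : ∀ (w : ℕ → Fin N), (∀ n, adj (w n) (w (n + 1))) → ∀ k : ℕ, ∀ x, x ∈ V (w 0) →
      ∀ m : ℕ, 1 ≤ m → m ≤ α → ‖iteratedFDeriv ℝ m (compFwd φm w (k+1)) x‖ ≤ D ^ m := by
    intro w hw k x hx m hm1 hmα
    obtain ⟨m', rfl⟩ : ∃ m', m = m' + 1 := ⟨m - 1, by omega⟩
    have heq : ‖iteratedFDeriv ℝ (m' + 1) (compFwd φm w (k+1)) x‖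
        = ‖iteratedFDeriv ℝ m' (deriv (compFwd φm w (k+1))) x‖ := by
      rw [norm_iteratedFDeriv_eq_norm_iteratedDeriv, norm_iteratedFDeriv_eq_norm_iteratedDeriv,
        iteratedDeriv_succ']
    rw [heq]
    calc ‖iteratedFDeriv ℝ m' (deriv (compFwd φm w (k+1))) x‖ ≤ Cf m' * θ₂ ^ (k+1) :=
          hCf m' w hw (k+1) x hx
      _ ≤ Cf m' := mul_le_of_le_one_right (hCf0 m').le (pow_le_one₀ hθ₂0 hθ₂1)
      _ ≤ D := (hCfle m' (by omega)).trans (le_max_right _ _)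
      _ ≤ D ^ (m' + 1) := le_self_pow₀ hD1 (by omega)
  choose Bf hBf0 hBf using hτB
  set Bs := ∑ m ∈ Finset.range (α+1), Bf m with hBs
  have hBs0 : 0 ≤ Bs := Finset.sum_nonneg fun m _ => hBf0 m
  have hBfle : ∀ m, m ≤ α → Bf m ≤ Bs := fun m hm =>
    Finset.single_le_sum (fun j _ => hBf0 j) (Finset.mem_range.2 (by omega))
  set A := (α.factorial : ℝ) * Bs * D ^ α + 1 with hA
  have hA0 : 0 < A := by positivity
  have hcompτ : ∀ (w : ℕ → Fin N), (∀ n, adj (w n) (w (n + 1))) → ∀ k : ℕ, ∀ x, x ∈ V (w 0) →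
      ∀ j : ℕ, j ≤ α →
      ‖iteratedFDeriv ℝ j (deriv τ ∘ compFwd φm w (k+1)) x‖ ≤ A := by
    intro w hw k x hx j hjα
    have h1 : ∀ m, m ≤ j →
        ‖iteratedFDeriv ℝ m (deriv τ) (compFwd φm w (k+1) x)‖ ≤ Bs :=
      fun m hm => (hBf m _ (hVK _ (compFwd_mem hmap hw hx (k+1)))).trans (hBfle m (by omega))
    have h2 : ∀ m, 1 ≤ m → m ≤ j → ‖iteratedFDeriv ℝ m (compFwd φm w (k+1)) x‖ ≤ D ^ m :=
      fun m h1m h2m => hgD w hw k x hx m h1m (by omega)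
    have hle := norm_iteratedFDeriv_comp_le (𝕜 := ℝ) (N := ((⊤:ℕ∞):WithTop ℕ∞))
      ((contDiff_infty_iff_deriv.mp hτ).2) (compFwd_smooth hsmooth hw (k+1))
      (hleTop' j) x h1 h2
    refine hle.trans ?_
    have hf1 : (j.factorial : ℝ) ≤ (α.factorial : ℝ) := by
      exact_mod_cast Nat.factorial_le hjα
    have hf2 : D ^ j ≤ D ^ α := pow_le_pow_right₀ hD1 hjα
    have : (j.factorial : ℝ) * Bs * D ^ j ≤ (α.factorial : ℝ) * Bs * D ^ α :=
      mul_le_mul (mul_le_mul hf1 le_rfl hBs0 (by positivity)) hf2 (by positivity) (by positivity)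
    linarith
  refine ⟨(∑ i ∈ Finset.range (α+1), (α.choose i : ℝ) * Cf i * A) + 1, by
      have : 0 ≤ ∑ i ∈ Finset.range (α+1), (α.choose i : ℝ) * Cf i * A :=
        Finset.sum_nonneg fun i _ =>
          mul_nonneg (mul_nonneg (Nat.cast_nonneg _) (hCf0 i).le) hA0.le
      linarith, fun w hw k x hx => ?_⟩
  have hfun : (fun y => deriv (compFwd φm w (k+1)) y * deriv τ (compFwd φm w (k+1) y))
      = fun y => deriv (compFwd φm w (k+1)) y * (deriv τ ∘ compFwd φm w (k+1)) y := rfl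
  rw [hfun]
  have hcd1 : ContDiff ℝ ((⊤:ℕ∞):WithTop ℕ∞) (deriv (compFwd φm w (k+1))) :=
    (contDiff_infty_iff_deriv.mp (compFwd_smooth hsmooth hw (k+1))).2
  have hcd2 : ContDiff ℝ ((⊤:ℕ∞):WithTop ℕ∞) (deriv τ ∘ compFwd φm w (k+1)) :=
    ((contDiff_infty_iff_deriv.mp hτ).2).comp (compFwd_smooth hsmooth hw (k+1))
  refine (norm_iteratedFDeriv_mul_le hcd1 hcd2 x (hleTop' α)).trans ?_
  have hpow : θ₂ ^ (k+1) ≤ θ₂ ^ k := pow_le_pow_of_le_one hθ₂0 hθ₂1 (Nat.le_succ k)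
  have hterms : ∀ i ∈ Finset.range (α+1),
      (α.choose i : ℝ) * ‖iteratedFDeriv ℝ i (deriv (compFwd φm w (k+1))) x‖
        * ‖iteratedFDeriv ℝ (α - i) (deriv τ ∘ compFwd φm w (k+1)) x‖
      ≤ ((α.choose i : ℝ) * Cf i * A) * θ₂ ^ k := by
    intro i hi
    have hi' := Finset.mem_range.1 hi
    have h1 : ‖iteratedFDeriv ℝ i (deriv (compFwd φm w (k+1))) x‖ ≤ Cf i * θ₂ ^ k :=
      (hCf i w hw (k+1) x hx).trans (mul_le_mul_of_nonneg_left hpow (hCf0 i).le)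
    have h2 : ‖iteratedFDeriv ℝ (α - i) (deriv τ ∘ compFwd φm w (k+1)) x‖ ≤ A :=
      hcompτ w hw k x hx (α - i) (by omega)
    calc (α.choose i : ℝ) * ‖iteratedFDeriv ℝ i (deriv (compFwd φm w (k+1))) x‖
          * ‖iteratedFDeriv ℝ (α - i) (deriv τ ∘ compFwd φm w (k+1)) x‖
        ≤ (α.choose i : ℝ) * (Cf i * θ₂ ^ k) * A :=
          mul_le_mul (mul_le_mul_of_nonneg_left h1 (Nat.cast_nonneg _)) h2 (norm_nonneg _)
            (mul_nonneg (Nat.cast_nonneg _) (mul_nonneg (hCf0 i).le (pow_nonneg hθ₂0 k)))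
      _ = ((α.choose i : ℝ) * Cf i * A) * θ₂ ^ k := by ring
  calc ∑ i ∈ Finset.range (α+1), (α.choose i : ℝ)
        * ‖iteratedFDeriv ℝ i (deriv (compFwd φm w (k+1))) x‖
        * ‖iteratedFDeriv ℝ (α - i) (deriv τ ∘ compFwd φm w (k+1)) x‖
      ≤ ∑ i ∈ Finset.range (α+1), ((α.choose i : ℝ) * Cf i * A) * θ₂ ^ k :=
        Finset.sum_le_sum hterms
    _ = (∑ i ∈ Finset.range (α+1), (α.choose i : ℝ) * Cf i * A) * θ₂ ^ k := by
        rw [← Finset.sum_mul]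
    _ ≤ ((∑ i ∈ Finset.range (α+1), (α.choose i : ℝ) * Cf i * A) + 1) * θ₂ ^ k := by
        have := pow_nonneg hθ₂0 k
        nlinarith

noncomputable def zetaCut (c d ε : ℝ) : ℝ → ℝ := fun x =>
  Real.smoothTransition ((x - (c - ε/2)) / (ε/4)) *
    Real.smoothTransition (((d + ε/2) - x) / (ε/4))

private lemma zetaCut_smooth (c d ε : ℝ) : ContDiff ℝ (⊤ : ℕ∞) (zetaCut c d ε) := by
  apply ContDiff.mul
  · exact Real.smoothTransition.contDiff.comp
      ((contDiff_id.sub contDiff_const).div_const _)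
  · exact Real.smoothTransition.contDiff.comp
      ((contDiff_const.sub contDiff_id).div_const _)

private lemma zetaCut_one {c d ε : ℝ} (hε : 0 < ε) {x : ℝ} (h1 : c - ε/4 ≤ x)
    (h2 : x ≤ d + ε/4) : zetaCut c d ε x = 1 := by
  unfold zetaCut
  rw [Real.smoothTransition.one_of_one_le, Real.smoothTransition.one_of_one_le, one_mul]
  · rw [le_div_iff₀ (by positivity)]; linarith
  · rw [le_div_iff₀ (by positivity)]; linarith

private lemma zetaCut_zero {c d ε : ℝ} (hε : 0 < ε) {x : ℝ}
    (h : x ∉ Icc (c - ε/2) (d + ε/2)) : zetaCut c d ε x = 0 := by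
  unfold zetaCut
  rw [mem_Icc, not_and_or] at h
  rcases h with h | h
  · rw [Real.smoothTransition.zero_of_nonpos, zero_mul]
    apply div_nonpos_of_nonpos_of_nonneg _ (by positivity)
    push_neg at h; linarith
  · have h0 : Real.smoothTransition (((d + ε/2) - x) / (ε/4)) = 0 := by
      apply Real.smoothTransition.zero_of_nonpos
      apply div_nonpos_of_nonpos_of_nonneg _ (by positivity)
      push_neg at h; linarith
    rw [h0, mul_zero]

private lemma zetaCut_compactSupport {c d ε : ℝ} (hε : 0 < ε) :
    HasCompactSupport (zetaCut c d ε) :=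
  HasCompactSupport.intro isCompact_Icc fun _ hx => zetaCut_zero hε hx

private lemma mem_thickening_Icc' {a b ε x : ℝ} (hab : a ≤ b) (hε : 0 < ε)
    (h : x ∈ Icc (a - ε/2) (b + ε/2)) : x ∈ Metric.thickening ε (Icc a b) := by
  rw [Metric.mem_thickening_iff]
  simp only [mem_Icc] at h
  rcases lt_or_ge x a with hxa | hxa
  · refine ⟨a, ⟨le_refl a, hab⟩, ?_⟩
    rw [Real.dist_eq, abs_of_nonpos (by linarith)]
    linarith [h.1]
  · rcases le_or_gt x b with hxb | hxb
    · exact ⟨x, ⟨hxa, hxb⟩, by simp [hε]⟩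
    · refine ⟨b, ⟨hab, le_refl b⟩, ?_⟩
      rw [Real.dist_eq, abs_of_nonneg (by linarith)]
      linarith [h.2]

end ZetaAux2
open Metric Real in
/-- **Smoothness and uniform bounds for the stable-leaf functions ζ**
(Proposition 4.13). For each admissible right-infinite word `w₊` the series
`ζ_{w₊}(x) = −∑_{k≥1} (φ_{w_{0,k}})'(x) τ'(φ_{w_{0,k}}(x))` converges, together
with all `x`-derivatives, uniformly on `I_{w_0}`; it defines a `C^∞` function,
and all its derivatives are bounded uniformly in `w₊`. -/
theorem zeta_smooth_uniform_bounds
    {N : ℕ} (hN : 1 ≤ N)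
    (I : Fin N → Set ℝ)
    (hIcc : ∀ i, ∃ a b : ℝ, a ≤ b ∧ I i = Set.Icc a b)
    (hIdisj : ∀ i j, i ≠ j → Disjoint (I i) (I j))
    (adj : Fin N → Fin N → Prop)
    (htrans : ∃ T : ℕ, 0 < T ∧ ∀ i j, ∃ p : ℕ → Fin N,
      p 0 = i ∧ p T = j ∧ ∀ k < T, adj (p k) (p (k + 1)))
    (φm : Fin N → Fin N → ℝ → ℝ)
    (θ : ℝ) (hθ0 : 0 < θ) (hθ1 : θ < 1)
    (hsmooth : ∀ i j, adj i j → ContDiff ℝ (⊤ : ℕ∞) (φm i j))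
    (hcontr : ∀ i j, adj i j → ∀ x ∈ I i, 0 < deriv (φm i j) x ∧ deriv (φm i j) x ≤ θ)
    (hinto : ∀ i j, adj i j → φm i j '' I i ⊆ interior (I j))
    (hsep : ∀ i j k l, adj i j → adj k l → (i, j) ≠ (k, l) →
      Disjoint (φm i j '' I i) (φm k l '' I k))
    (τ : ℝ → ℝ) (hτ : ContDiff ℝ (⊤ : ℕ∞) τ) :
    ∃ ζ : {w : ℕ → Fin N // ∀ n, adj (w n) (w (n + 1))} → ℝ → ℝ,
      (∀ w : {w : ℕ → Fin N // ∀ n, adj (w n) (w (n + 1))},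
        ContDiffOn ℝ (⊤ : ℕ∞) (ζ w) (I (w.1 0))) ∧
      (∀ w : {w : ℕ → Fin N // ∀ n, adj (w n) (w (n + 1))}, ∀ α : ℕ,
        TendstoUniformlyOn
          (fun (n : ℕ) (x : ℝ) => iteratedDerivWithin α
            (fun y => -∑ k ∈ Finset.range n,
              deriv (compFwd φm w.1 (k + 1)) y * deriv τ (compFwd φm w.1 (k + 1) y))
            (I (w.1 0)) x)
          (iteratedDerivWithin α (ζ w) (I (w.1 0))) atTop (I (w.1 0))) ∧
      (∀ α : ℕ, ∃ C : ℝ, 0 < C ∧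
        ∀ w : {w : ℕ → Fin N // ∀ n, adj (w n) (w (n + 1))}, ∀ x ∈ I (w.1 0),
          |iteratedDerivWithin α (ζ w) (I (w.1 0)) x| ≤ C) := by
  classical
  choose a b hab hIe using hIcc
  have hIcomp : ∀ i, IsCompact (I i) := fun i => by rw [hIe i]; exact isCompact_Icc
  have hInonempty : ∀ i, (I i).Nonempty := fun i => by
    rw [hIe i]; exact nonempty_Icc.2 (hab i)
  obtain ⟨T, hT0, hpath⟩ := htrans
  have hlt : ∀ j, a j < b j := by
    intro j
    obtain ⟨p, hp0, hpT, hpadj⟩ := hpath j j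
    have hadj : adj (p (T - 1)) j := by
      have h := hpadj (T - 1) (by omega)
      rwa [show T - 1 + 1 = T by omega, hpT] at h
    have hne : (interior (I j)).Nonempty := by
      obtain ⟨y, hy⟩ := hInonempty (p (T - 1))
      exact ⟨φm (p (T - 1)) j y, hinto _ _ hadj ⟨y, hy, rfl⟩⟩
    rw [hIe j, interior_Icc] at hne
    obtain ⟨x, hx⟩ := hne
    exact hx.1.trans hx.2
  set θ₁ := (1 + θ) / 2 with hθ₁def
  set θ₂ := (3 + θ) / 4 with hθ₂def
  have hθ₁0 : 0 ≤ θ₁ := by rw [hθ₁def]; linarith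
  have hθθ₁ : θ < θ₁ := by rw [hθ₁def]; linarith
  have h12 : θ₁ < θ₂ := by rw [hθ₁def, hθ₂def]; linarith
  have hθ₂1 : θ₂ < 1 := by rw [hθ₂def]; linarith
  have hθ₂0 : 0 ≤ θ₂ := hθ₁0.trans h12.le
  haveI : Nonempty (Fin N) := ⟨⟨0, hN⟩⟩
  -- choice of ε
  have hεx : ∀ i j : Fin N, ∃ ε : ℝ, 0 < ε ∧ (adj i j →
      (∀ x ∈ thickening ε (I i), |deriv (φm i j) x| ≤ θ₁) ∧
      (∀ x ∈ thickening ε (I i), φm i j x ∈ I j)) := by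
    intro i j
    by_cases h : adj i j
    · have hUopen : IsOpen ({x | |deriv (φm i j) x| < θ₁} ∩ φm i j ⁻¹' interior (I j)) := by
        apply IsOpen.inter
        · exact isOpen_lt (continuous_abs.comp ((hsmooth i j h).continuous_deriv oneLeTop'))
            continuous_const
        · exact isOpen_interior.preimage ((hsmooth i j h).continuous)
      have hsubU : I i ⊆ {x | |deriv (φm i j) x| < θ₁} ∩ φm i j ⁻¹' interior (I j) := by
        intro x hx
        refine ⟨?_, hinto i j h ⟨x, hx, rfl⟩⟩
        have := hcontr i j h x hx
        rw [Set.mem_setOf_eq, abs_of_pos this.1]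
        exact lt_of_le_of_lt this.2 hθθ₁
      obtain ⟨δ, hδ0, hδ⟩ := (hIcomp i).exists_thickening_subset_open hUopen hsubU
      exact ⟨δ, hδ0, fun _ => ⟨fun x hx => (hδ hx).1.le, fun x hx => interior_subset (hδ hx).2⟩⟩
    · exact ⟨1, one_pos, fun h' => absurd h' h⟩
  choose εf hεf0 hεf using hεx
  have huniv : (Finset.univ : Finset (Fin N × Fin N)).Nonempty := Finset.univ_nonempty
  set ε := Finset.univ.inf' huniv (fun p : Fin N × Fin N => εf p.1 p.2) with hεdef
  have hε0 : 0 < ε := by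
    rw [hεdef, Finset.lt_inf'_iff]; exact fun p _ => hεf0 p.1 p.2
  have hεle : ∀ i j, ε ≤ εf i j := fun i j => Finset.inf'_le _ (Finset.mem_univ (i, j))
  set V : Fin N → Set ℝ := fun i => thickening ε (I i) with hVdef
  have hIV : ∀ i, I i ⊆ V i := fun i => self_subset_thickening hε0 _
  have hmap : ∀ i j, adj i j → ∀ x ∈ V i, φm i j x ∈ V j := fun i j hadj x hx =>
    hIV j ((hεf i j hadj).2 x (thickening_mono (hεle i j) _ hx))
  have hd : ∀ i j, adj i j → ∀ x ∈ V i, |deriv (φm i j) x| ≤ θ₁ := fun i j hadj x hx =>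
    (hεf i j hadj).1 x (thickening_mono (hεle i j) _ hx)
  set K : Set ℝ := ⋃ i, I i with hKdef
  set Kc := cthickening ε K with hKcdef
  have hKcomp : IsCompact Kc := (isCompact_iUnion hIcomp).cthickening
  have hVK : ∀ i, V i ⊆ Kc := fun i =>
    (thickening_subset_cthickening ε (I i)).trans
      (cthickening_subset_of_subset ε (subset_iUnion I i))
  have hcont_iFD : ∀ (f : ℝ → ℝ), ContDiff ℝ (⊤ : ℕ∞) f → ∀ m : ℕ,
      Continuous (iteratedFDeriv ℝ m f) := fun f hf m =>
    hf.continuous_iteratedFDeriv (hleTop' m)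
  have hB : ∀ m : ℕ, ∃ B : ℝ, 0 ≤ B ∧ ∀ i j, adj i j → ∀ x ∈ Kc,
      ‖iteratedFDeriv ℝ m (deriv (φm i j)) x‖ ≤ B := by
    intro m
    have hpair : ∀ q : Fin N × Fin N, ∃ B : ℝ, 0 ≤ B ∧ (adj q.1 q.2 → ∀ x ∈ Kc,
        ‖iteratedFDeriv ℝ m (deriv (φm q.1 q.2)) x‖ ≤ B) := by
      intro q
      by_cases h : adj q.1 q.2
      · obtain ⟨B, hBb⟩ := hKcomp.exists_bound_of_continuousOn
          ((hcont_iFD _ ((contDiff_infty_iff_deriv.mp (hsmooth _ _ h)).2) m).continuousOn)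
        exact ⟨max B 0, le_max_right _ _, fun _ x hx => (hBb x hx).trans (le_max_left _ _)⟩
      · exact ⟨0, le_refl 0, fun h' => absurd h' h⟩
    choose Bf hBf0 hBf using hpair
    refine ⟨∑ q ∈ Finset.univ, Bf q, Finset.sum_nonneg fun q _ => hBf0 q,
      fun i j hadj x hx => ?_⟩
    exact (hBf (i, j) hadj x hx).trans
      (Finset.single_le_sum (fun q _ => hBf0 q) (Finset.mem_univ (i, j)))
  have hτB : ∀ m : ℕ, ∃ B : ℝ, 0 ≤ B ∧ ∀ x ∈ Kc,
      ‖iteratedFDeriv ℝ m (deriv τ) x‖ ≤ B := by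
    intro m
    obtain ⟨B, hBb⟩ := hKcomp.exists_bound_of_continuousOn
      ((hcont_iFD _ ((contDiff_infty_iff_deriv.mp hτ).2) m).continuousOn)
    exact ⟨max B 0, le_max_right _ _, fun x hx => (hBb x hx).trans (le_max_left _ _)⟩
  have hmain := main_est hsmooth hmap hVK hθ₁0 h12 hθ₂1.le hd hB
  have hterm := term_est hsmooth hmap hVK hθ₂0 hθ₂1.le hτ hτB hmain
  choose Tf hTf0 hTf using hterm
  -- cutoffs
  set χ : Fin N → ℝ → ℝ := fun i => zetaCut (a i) (b i) ε with hχdef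
  have hχ_smooth : ∀ i, ContDiff ℝ (⊤ : ℕ∞) (χ i) := fun i => zetaCut_smooth _ _ _
  have hχ_bound : ∀ m : ℕ, ∃ X : ℝ, 0 ≤ X ∧ ∀ i x, ‖iteratedFDeriv ℝ m (χ i) x‖ ≤ X := by
    intro m
    have hi : ∀ i : Fin N, ∃ X : ℝ, 0 ≤ X ∧ ∀ x, ‖iteratedFDeriv ℝ m (χ i) x‖ ≤ X := by
      intro i
      obtain ⟨X, hX⟩ := ((zetaCut_compactSupport hε0).iteratedFDeriv m).exists_bound_of_continuous
        (hcont_iFD _ (hχ_smooth i) m)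
      exact ⟨max X 0, le_max_right _ _, fun x => (hX x).trans (le_max_left _ _)⟩
    choose Xg hXg0 hXg using hi
    refine ⟨∑ i ∈ Finset.univ, Xg i, Finset.sum_nonneg fun i _ => hXg0 i, fun i x => ?_⟩
    exact (hXg i x).trans (Finset.single_le_sum (fun q _ => hXg0 q) (Finset.mem_univ i))
  choose Xf hXf0 hXf using hχ_bound
  have hIccV : ∀ i, Icc (a i - ε/2) (b i + ε/2) ⊆ V i := by
    intro i x hx
    have := mem_thickening_Icc' (hab i) hε0 hx
    rw [hVdef]
    rwa [← hIe i] at this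
  -- the term functions
  set F : (ℕ → Fin N) → ℕ → ℝ → ℝ := fun w k y =>
    -(χ (w 0) y *
      (deriv (compFwd φm w (k + 1)) y * deriv τ (compFwd φm w (k + 1) y))) with hFdef
  have hFsmooth : ∀ (w : ℕ → Fin N), (∀ n, adj (w n) (w (n + 1))) → ∀ k : ℕ,
      ContDiff ℝ (⊤ : ℕ∞) (F w k) := by
    intro w hw k
    apply ContDiff.neg
    apply (hχ_smooth _).mul
    apply ContDiff.mul
    · exact (contDiff_infty_iff_deriv.mp (compFwd_smooth hsmooth hw (k + 1))).2
    · exact ((contDiff_infty_iff_deriv.mp hτ).2).comp (compFwd_smooth hsmooth hw (k + 1))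
  -- global bound on terms
  set U : ℕ → ℝ := fun α =>
    (∑ i ∈ Finset.range (α + 1), (α.choose i : ℝ) * Xf i * Tf (α - i)) + 1 with hUdef
  have hU0 : ∀ α, 0 < U α := by
    intro α
    have : 0 ≤ ∑ i ∈ Finset.range (α + 1), (α.choose i : ℝ) * Xf i * Tf (α - i) :=
      Finset.sum_nonneg fun i _ =>
        mul_nonneg (mul_nonneg (Nat.cast_nonneg _) (hXf0 i)) (hTf0 _).le
    rw [hUdef]; dsimp only; linarith
  have hFb : ∀ α : ℕ, ∀ (w : ℕ → Fin N), (∀ n, adj (w n) (w (n + 1))) → ∀ k y,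
      ‖iteratedFDeriv ℝ α (F w k) y‖ ≤ U α * θ₂ ^ k := by
    intro α w hw k y
    have hneg : ‖iteratedFDeriv ℝ α (F w k) y‖ = ‖iteratedFDeriv ℝ α
        (fun y => χ (w 0) y *
          (deriv (compFwd φm w (k + 1)) y * deriv τ (compFwd φm w (k + 1) y))) y‖ := by
      have : F w k = -(fun y => χ (w 0) y *
          (deriv (compFwd φm w (k + 1)) y * deriv τ (compFwd φm w (k + 1) y))) := rfl
      rw [this, iteratedFDeriv_neg_apply, norm_neg]
    rw [hneg]
    by_cases hy : y ∈ V (w 0)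
    · have hsm2 : ContDiff ℝ ((⊤ : ℕ∞) : WithTop ℕ∞)
          (fun y => deriv (compFwd φm w (k + 1)) y * deriv τ (compFwd φm w (k + 1) y)) :=
        ((contDiff_infty_iff_deriv.mp (compFwd_smooth hsmooth hw (k + 1))).2).mul
          (((contDiff_infty_iff_deriv.mp hτ).2).comp (compFwd_smooth hsmooth hw (k + 1)))
      refine (norm_iteratedFDeriv_mul_le (hχ_smooth (w 0)) hsm2 y (hleTop' α)).trans ?_
      have hterms : ∀ i ∈ Finset.range (α + 1),
          (α.choose i : ℝ) * ‖iteratedFDeriv ℝ i (χ (w 0)) y‖ *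
            ‖iteratedFDeriv ℝ (α - i)
              (fun y => deriv (compFwd φm w (k + 1)) y *
                deriv τ (compFwd φm w (k + 1) y)) y‖
          ≤ ((α.choose i : ℝ) * Xf i * Tf (α - i)) * θ₂ ^ k := by
        intro i hi
        have h1 := hXf i (w 0) y
        have h2 := hTf (α - i) w hw k y hy
        calc (α.choose i : ℝ) * ‖iteratedFDeriv ℝ i (χ (w 0)) y‖ *
              ‖iteratedFDeriv ℝ (α - i)
                (fun y => deriv (compFwd φm w (k + 1)) y *
                  deriv τ (compFwd φm w (k + 1) y)) y‖
            ≤ (α.choose i : ℝ) * Xf i * (Tf (α - i) * θ₂ ^ k) :=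
              mul_le_mul (mul_le_mul_of_nonneg_left h1 (Nat.cast_nonneg _)) h2 (norm_nonneg _)
                (mul_nonneg (Nat.cast_nonneg _) (hXf0 i))
          _ = ((α.choose i : ℝ) * Xf i * Tf (α - i)) * θ₂ ^ k := by ring
      calc ∑ i ∈ Finset.range (α + 1),
            (α.choose i : ℝ) * ‖iteratedFDeriv ℝ i (χ (w 0)) y‖ *
              ‖iteratedFDeriv ℝ (α - i)
                (fun y => deriv (compFwd φm w (k + 1)) y *
                  deriv τ (compFwd φm w (k + 1) y)) y‖
          ≤ ∑ i ∈ Finset.range (α + 1), ((α.choose i : ℝ) * Xf i * Tf (α - i)) * θ₂ ^ k :=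
            Finset.sum_le_sum hterms
        _ = (∑ i ∈ Finset.range (α + 1), (α.choose i : ℝ) * Xf i * Tf (α - i)) * θ₂ ^ k := by
            rw [← Finset.sum_mul]
        _ ≤ U α * θ₂ ^ k := by
            have h1 := pow_nonneg hθ₂0 k
            have : (∑ i ∈ Finset.range (α + 1), (α.choose i : ℝ) * Xf i * Tf (α - i)) ≤ U α := by
              rw [hUdef]; dsimp only; linarith
            exact mul_le_mul_of_nonneg_right this h1
    · have hyc : y ∈ (Icc (a (w 0) - ε/2) (b (w 0) + ε/2))ᶜ :=
        fun hmem => hy (hIccV _ hmem)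
      have hev : (fun y => χ (w 0) y *
          (deriv (compFwd φm w (k + 1)) y * deriv τ (compFwd φm w (k + 1) y)))
          =ᶠ[nhds y] (fun _ => (0 : ℝ)) := by
        apply eventuallyEq_of_mem (isClosed_Icc.isOpen_compl.mem_nhds hyc)
        intro z hz
        have : χ (w 0) z = 0 := zetaCut_zero hε0 hz
        simp [this]
      rw [iteratedFDeriv_congr_nhds' hev α]
      have : iteratedFDeriv ℝ α (fun _ : ℝ => (0 : ℝ)) = 0 := iteratedFDeriv_zero_fun
      rw [this]
      simp only [Pi.zero_apply, norm_zero]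
      exact mul_nonneg (hU0 α).le (pow_nonneg hθ₂0 k)
  -- summability
  have hv_sum : ∀ α : ℕ, Summable (fun k => U α * θ₂ ^ k) := fun α =>
    (summable_geometric_of_lt_one hθ₂0 hθ₂1).mul_left _
  -- the function ζ
  set ζ : {w : ℕ → Fin N // ∀ n, adj (w n) (w (n + 1))} → ℝ → ℝ :=
    fun w => fun x => ∑' k, F w.1 k x with hζdef
  have hζsmooth : ∀ w : {w : ℕ → Fin N // ∀ n, adj (w n) (w (n + 1))},
      ContDiff ℝ (⊤ : ℕ∞) (ζ w) := by
    intro w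
    apply contDiff_tsum (fun k => hFsmooth w.1 w.2 k) (fun m _ => hv_sum m)
    intro m k x _
    exact hFb m w.1 w.2 k x
  have hUD : ∀ w : {w : ℕ → Fin N // ∀ n, adj (w n) (w (n + 1))},
      UniqueDiffOn ℝ (I (w.1 0)) := fun w => by
    rw [hIe]; exact uniqueDiffOn_Icc (hlt _)
  refine ⟨ζ, fun w => (hζsmooth w).contDiffOn, ?_, ?_⟩
  · -- uniform convergence of all derivatives
    intro w α
    have hTU : TendstoUniformlyOn
        (fun n x => ∑ k ∈ Finset.range n, iteratedDeriv α (F w.1 k) x)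
        (fun x => ∑' k, iteratedDeriv α (F w.1 k) x) atTop (I (w.1 0)) := by
      apply tendstoUniformlyOn_tsum_nat (hv_sum α)
      intro k x _
      rw [← norm_iteratedFDeriv_eq_norm_iteratedDeriv]
      exact hFb α w.1 w.2 k x
    have hseq : ∀ n : ℕ, Set.EqOn
        (fun x => ∑ k ∈ Finset.range n, iteratedDeriv α (F w.1 k) x)
        (fun x => iteratedDerivWithin α
          (fun y => -∑ k ∈ Finset.range n,
            deriv (compFwd φm w.1 (k + 1)) y * deriv τ (compFwd φm w.1 (k + 1) y))
          (I (w.1 0)) x) (I (w.1 0)) := by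
      intro n x hx
      have hSsm : ContDiff ℝ (⊤ : ℕ∞) (fun y => -∑ k ∈ Finset.range n,
          deriv (compFwd φm w.1 (k + 1)) y * deriv τ (compFwd φm w.1 (k + 1) y)) := by
        apply ContDiff.neg
        apply ContDiff.sum
        intro k _
        exact ((contDiff_infty_iff_deriv.mp (compFwd_smooth hsmooth w.2 (k + 1))).2).mul
          (((contDiff_infty_iff_deriv.mp hτ).2).comp (compFwd_smooth hsmooth w.2 (k + 1)))
      have e1 : iteratedDerivWithin α (fun y => -∑ k ∈ Finset.range n,
          deriv (compFwd φm w.1 (k + 1)) y * deriv τ (compFwd φm w.1 (k + 1) y))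
          (I (w.1 0)) x = iteratedDeriv α (fun y => -∑ k ∈ Finset.range n,
          deriv (compFwd φm w.1 (k + 1)) y * deriv τ (compFwd φm w.1 (k + 1) y)) x :=
        iteratedDerivWithin_eq_iteratedDeriv' hSsm (hUD w) hx α
      have hxO : x ∈ Ioo (a (w.1 0) - ε/4) (b (w.1 0) + ε/4) := by
        have hx' : x ∈ Icc (a (w.1 0)) (b (w.1 0)) := by rw [← hIe]; exact hx
        exact ⟨by linarith [hx'.1], by linarith [hx'.2]⟩
      have hev : (fun y => -∑ k ∈ Finset.range n,
          deriv (compFwd φm w.1 (k + 1)) y * deriv τ (compFwd φm w.1 (k + 1) y))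
          =ᶠ[nhds x] (fun y => ∑ k ∈ Finset.range n, F w.1 k y) := by
        apply eventuallyEq_of_mem (isOpen_Ioo.mem_nhds hxO)
        intro z hz
        have hχz : χ (w.1 0) z = 1 := zetaCut_one hε0 hz.1.le hz.2.le
        show -∑ k ∈ Finset.range n,
            deriv (compFwd φm w.1 (k + 1)) z * deriv τ (compFwd φm w.1 (k + 1) z)
          = ∑ k ∈ Finset.range n, F w.1 k z
        have : ∀ k, F w.1 k z =
            -(deriv (compFwd φm w.1 (k + 1)) z * deriv τ (compFwd φm w.1 (k + 1) z)) := by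
          intro k
          show -(χ (w.1 0) z * _) = _
          rw [hχz, one_mul]
        simp_rw [this]
        rw [Finset.sum_neg_distrib]
      have e2 : iteratedDeriv α (fun y => -∑ k ∈ Finset.range n,
          deriv (compFwd φm w.1 (k + 1)) y * deriv τ (compFwd φm w.1 (k + 1) y)) x
          = iteratedDeriv α (fun y => ∑ k ∈ Finset.range n, F w.1 k y) x :=
        iteratedDeriv_congr_nhds' hev α
      have e3 : iteratedDeriv α (fun y => ∑ k ∈ Finset.range n, F w.1 k y) x
          = ∑ k ∈ Finset.range n, iteratedDeriv α (F w.1 k) x :=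
        iteratedDeriv_sum' (fun k _ => hFsmooth w.1 w.2 k) α x
      exact (e1.trans (e2.trans e3)).symm
    have hlim : Set.EqOn (fun x => ∑' k, iteratedDeriv α (F w.1 k) x)
        (iteratedDerivWithin α (ζ w) (I (w.1 0))) (I (w.1 0)) := by
      intro x hx
      have e1 : iteratedDerivWithin α (ζ w) (I (w.1 0)) x = iteratedDeriv α (ζ w) x :=
        iteratedDerivWithin_eq_iteratedDeriv' (hζsmooth w) (hUD w) hx α
      have hsummable : Summable (fun k => iteratedFDeriv ℝ α (F w.1 k) x) :=
        Summable.of_norm_bounded (hv_sum α) (fun k => hFb α w.1 w.2 k x)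
      have hhs : HasSum (fun k => iteratedFDeriv ℝ α (F w.1 k) x)
          (iteratedFDeriv ℝ α (ζ w) x) := by
        have := iteratedFDeriv_tsum_apply (𝕜 := ℝ) (fun k => hFsmooth w.1 w.2 k)
          (fun m _ => hv_sum m) (fun m k x _ => hFb m w.1 w.2 k x) (le_top (a := (α : ℕ∞))) x
        rw [hζdef]
        dsimp only
        rw [this]
        exact hsummable.hasSum
      have hhs2 := ContinuousMultilinearMap.hasSum_eval hhs (fun _ => (1 : ℝ))
      show ∑' k, iteratedDeriv α (F w.1 k) x = iteratedDerivWithin α (ζ w) (I (w.1 0)) x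
      rw [e1, iteratedDeriv_eq_iteratedFDeriv, ← hhs2.tsum_eq]
      exact tsum_congr fun k => iteratedDeriv_eq_iteratedFDeriv
    exact (hTU.congr (Eventually.of_forall fun n => hseq n)).congr_right hlim
  · -- uniform bounds
    intro α
    refine ⟨U α * (1 - θ₂)⁻¹ + 1, ?_, ?_⟩
    · have h1 : 0 < (1 - θ₂)⁻¹ := inv_pos.2 (by linarith)
      have := hU0 α
      positivity
    · intro w x hx
      have e1 : iteratedDerivWithin α (ζ w) (I (w.1 0)) x = iteratedDeriv α (ζ w) x :=
        iteratedDerivWithin_eq_iteratedDeriv' (hζsmooth w) (hUD w) hx α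
      rw [e1, ← Real.norm_eq_abs, ← norm_iteratedFDeriv_eq_norm_iteratedDeriv]
      have heq : iteratedFDeriv ℝ α (ζ w) x = ∑' k, iteratedFDeriv ℝ α (F w.1 k) x := by
        have := iteratedFDeriv_tsum_apply (𝕜 := ℝ) (fun k => hFsmooth w.1 w.2 k)
          (fun m _ => hv_sum m) (fun m k x _ => hFb m w.1 w.2 k x) (le_top (a := (α : ℕ∞))) x
        rw [hζdef]
        dsimp only
        rw [this]
      rw [heq]
      refine (tsum_of_norm_bounded (hv_sum α).hasSum (fun k => hFb α w.1 w.2 k x)).trans ?_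
      rw [tsum_mul_left, tsum_geometric_of_lt_one hθ₂0 hθ₂1]
      linarith
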